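/- Let r > 0, a ∈ ℝ, A(t,s) = e^{2s+2t} + (a−r)²e^{2s} + e^{2t} + (a+r)², and φ(t,s) = arcosh(A/(4re^{s+t})). If r > |a| and (t₀, s₀) are defined by e^{2t₀} = r² − a² and e^{2s₀} = (r+a)/(r−a), then the zero set of ∂²φ/∂s∂t (wherever A² > 16r²e^{2s+2t}) is exactly {(t,s) : t = t₀ or s = s₀}. -/

import Mathlib

/-- Inverse hyperbolic cosine: `arcosh x = log (x + √(x² − 1))`. -/
noncomputable def arcosh (x : ℝ) : ℝ := Real.log (x + Real.sqrt (x ^ 2 - 1))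

/-- `A(t,s) = e^{2s+2t} + (a−r)²e^{2s} + e^{2t} + (a+r)²`. -/
noncomputable def Afun (r a t s : ℝ) : ℝ :=
  Real.exp (2 * s + 2 * t) + (a - r) ^ 2 * Real.exp (2 * s) + Real.exp (2 * t) + (a + r) ^ 2

/-- Hyperbolic distance between `(0,eᵗ)` and the point at arclength parameter `s` on the
half-circle geodesic of center `(a,0)` and radius `r`. -/
noncomputable def phiCirc (r a t s : ℝ) : ℝ :=
  arcosh (Afun r a t s / (4 * r * Real.exp (s + t)))

/-- auxiliary: `B = A² − 16r²e^{2s+2t}` -/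
noncomputable def Bfun (r a t s : ℝ) : ℝ :=
  Afun r a t s ^ 2 - 16 * r ^ 2 * Real.exp (2 * s + 2 * t)

/-- auxiliary: `C = e^{2s+2t} − (a−r)²e^{2s} + e^{2t} − (a+r)²`, the numerator of `∂φ/∂t`. -/
noncomputable def Cfun (r a t s : ℝ) : ℝ :=
  Real.exp (2 * s + 2 * t) - (a - r) ^ 2 * Real.exp (2 * s) + Real.exp (2 * t) - (a + r) ^ 2

lemma arcosh_hasDerivAt {x : ℝ} (hx : 1 < x) :
    HasDerivAt arcosh (Real.sqrt (x ^ 2 - 1))⁻¹ x := by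
  have h1 : 0 < x ^ 2 - 1 := by nlinarith
  have hs : 0 < Real.sqrt (x ^ 2 - 1) := Real.sqrt_pos.mpr h1
  have hy : HasDerivAt (fun y : ℝ => y ^ 2 - 1) (2 * x) x := by
    simpa using (hasDerivAt_pow 2 x).sub_const 1
  have hsq : HasDerivAt (fun y : ℝ => Real.sqrt (y ^ 2 - 1))
      (1 / (2 * Real.sqrt (x ^ 2 - 1)) * (2 * x)) x :=
    (Real.hasDerivAt_sqrt h1.ne').comp x hy
  have hinner : HasDerivAt (fun y : ℝ => y + Real.sqrt (y ^ 2 - 1))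
      (1 + 1 / (2 * Real.sqrt (x ^ 2 - 1)) * (2 * x)) x := (hasDerivAt_id x).add hsq
  have hpos : 0 < x + Real.sqrt (x ^ 2 - 1) := by positivity
  have hlog := hinner.log hpos.ne'
  have harc : arcosh = fun y : ℝ => Real.log (y + Real.sqrt (y ^ 2 - 1)) := rfl
  rw [harc]
  convert hlog using 1
  rw [eq_div_iff hpos.ne']
  field_simp
  nlinarith [Real.sq_sqrt h1.le, hs]

lemma hasDerivAt_phiCirc_t (r a t s : ℝ) (hr : 0 < r)
    (hB : 16 * r ^ 2 * Real.exp (2 * s + 2 * t) < Afun r a t s ^ 2) :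
    HasDerivAt (fun t' => phiCirc r a t' s)
      (Cfun r a t s / Real.sqrt (Bfun r a t s)) t := by
  set d : ℝ := 4 * r * Real.exp (s + t) with hd_def
  have hd : 0 < d := by positivity
  have hd2 : d ^ 2 = 16 * r ^ 2 * Real.exp (2 * s + 2 * t) := by
    have h : Real.exp (2 * s + 2 * t) = Real.exp (s + t) * Real.exp (s + t) := by
      rw [← Real.exp_add]; ring_nf
    rw [hd_def, h]; ring
  have hApos : 0 < Afun r a t s := by
    unfold Afun; positivity
  have hAd : d < Afun r a t s := by nlinarith
  have hu1 : 1 < Afun r a t s / d := (one_lt_div hd).mpr hAd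
  have hBpos : 0 < Bfun r a t s := by unfold Bfun; linarith
  -- derivative of A in t
  have hlin1 : HasDerivAt (fun t' : ℝ => 2 * s + 2 * t') 2 t := by
    simpa using ((hasDerivAt_id t).const_mul (2 : ℝ)).const_add (2 * s)
  have hlin2 : HasDerivAt (fun t' : ℝ => 2 * t') 2 t := by
    simpa using (hasDerivAt_id t).const_mul (2 : ℝ)
  have hA : HasDerivAt (fun t' => Afun r a t' s)
      (Real.exp (2 * s + 2 * t) * 2 + Real.exp (2 * t) * 2) t := by
    unfold Afun
    exact ((hlin1.exp.add_const ((a - r) ^ 2 * Real.exp (2 * s))).add hlin2.exp).add_const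
      ((a + r) ^ 2)
  have hden : HasDerivAt (fun t' : ℝ => 4 * r * Real.exp (s + t')) (4 * r * Real.exp (s + t)) t := by
    have h : HasDerivAt (fun t' : ℝ => s + t') 1 t := by
      simpa using (hasDerivAt_id t).const_add s
    simpa using h.exp.const_mul (4 * r)
  have hu : HasDerivAt (fun t' => Afun r a t' s / (4 * r * Real.exp (s + t')))
      (Cfun r a t s / d) t := by
    have h := hA.div hden (by positivity)
    refine h.congr_deriv ?_
    rw [hd_def]
    unfold Afun Cfun
    have e1 : Real.exp (2 * s + 2 * t) = Real.exp s ^ 2 * Real.exp t ^ 2 := by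
      rw [show 2 * s + 2 * t = (s + s) + (t + t) by ring, Real.exp_add, Real.exp_add, Real.exp_add]
      ring
    have e2 : Real.exp (2 * s) = Real.exp s ^ 2 := by
      rw [two_mul, Real.exp_add]; ring
    have e3 : Real.exp (2 * t) = Real.exp t ^ 2 := by
      rw [two_mul, Real.exp_add]; ring
    have e4 : Real.exp (s + t) = Real.exp s * Real.exp t := Real.exp_add s t
    rw [e1, e2, e3, e4]
    have h1 := Real.exp_ne_zero s
    have h2 := Real.exp_ne_zero t
    field_simp
    ring
  have hphi := (arcosh_hasDerivAt hu1).comp t hu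
  have key : Real.sqrt ((Afun r a t s / d) ^ 2 - 1) = Real.sqrt (Bfun r a t s) / d := by
    have h : (Afun r a t s / d) ^ 2 - 1 = (Real.sqrt (Bfun r a t s) / d) ^ 2 := by
      rw [div_pow, div_pow, Real.sq_sqrt hBpos.le]
      unfold Bfun
      field_simp
      rw [show 2 * (s + t) = 2 * s + 2 * t by ring]
      linarith [hd2]
    rw [h, Real.sqrt_sq (by positivity)]
  have hfun : (fun t' => phiCirc r a t' s) =
      arcosh ∘ (fun t' => Afun r a t' s / (4 * r * Real.exp (s + t'))) := rfl
  rw [hfun]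
  refine hphi.congr_deriv ?_
  rw [key]
  have hsB : 0 < Real.sqrt (Bfun r a t s) := Real.sqrt_pos.mpr hBpos
  field_simp

theorem stmt4 (r a t₀ s₀ : ℝ) (hr : 0 < r) (hra : |a| < r)
    (ht₀ : Real.exp (2 * t₀) = r ^ 2 - a ^ 2)
    (hs₀ : Real.exp (2 * s₀) = (r + a) / (r - a)) :
    ∀ t s : ℝ, 16 * r ^ 2 * Real.exp (2 * s + 2 * t) < Afun r a t s ^ 2 →
      (deriv (fun s' => deriv (fun t' => phiCirc r a t' s') t) s = 0 ↔
        t = t₀ ∨ s = s₀) := by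
  intro t s hB
  obtain ⟨ha1, ha2⟩ := abs_lt.mp hra
  have hra1 : 0 < r - a := by linarith
  have hra2 : 0 < r + a := by linarith
  have hBpos : 0 < Bfun r a t s := by unfold Bfun; linarith
  -- step 1: near s, the inner derivative has an explicit formula
  have hcont : Continuous fun s' => Bfun r a t s' := by
    unfold Bfun Afun; continuity
  have hev : ∀ᶠ s' in nhds s,
      16 * r ^ 2 * Real.exp (2 * s' + 2 * t) < Afun r a t s' ^ 2 := by
    have h := (hcont.continuousAt (x := s)).eventually (eventually_gt_nhds hBpos)
    refine h.mono fun s' h' => ?_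
    unfold Bfun at h'; linarith
  have heq : (fun s' => deriv (fun t' => phiCirc r a t' s') t) =ᶠ[nhds s]
      fun s' => Cfun r a t s' / Real.sqrt (Bfun r a t s') :=
    hev.mono fun s' h' => (hasDerivAt_phiCirc_t r a t s' hr h').deriv
  rw [heq.deriv_eq]
  -- step 2: differentiate the explicit formula in s
  have hlin1 : HasDerivAt (fun s' : ℝ => 2 * s' + 2 * t) 2 s := by
    simpa using (((hasDerivAt_id s).const_mul (2 : ℝ)).add_const (2 * t))
  have hlin2 : HasDerivAt (fun s' : ℝ => 2 * s') 2 s := by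
    simpa using (hasDerivAt_id s).const_mul (2 : ℝ)
  set Cs : ℝ := 2 * Real.exp (2 * s + 2 * t) - (a - r) ^ 2 * (2 * Real.exp (2 * s)) with hCs_def
  set As : ℝ := 2 * Real.exp (2 * s + 2 * t) + (a - r) ^ 2 * (2 * Real.exp (2 * s)) with hAs_def
  set Bs : ℝ := 2 * Afun r a t s * As - 16 * r ^ 2 * (2 * Real.exp (2 * s + 2 * t)) with hBs_def
  have hC : HasDerivAt (fun s' => Cfun r a t s') Cs s := by
    unfold Cfun
    have h := ((hlin1.exp.sub (hlin2.exp.const_mul ((a - r) ^ 2))).add_const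
      (Real.exp (2 * t))).sub_const ((a + r) ^ 2)
    refine h.congr_deriv ?_
    rw [hCs_def]; ring
  have hA : HasDerivAt (fun s' => Afun r a t s') As s := by
    unfold Afun
    have h := ((hlin1.exp.add (hlin2.exp.const_mul ((a - r) ^ 2))).add_const
      (Real.exp (2 * t))).add_const ((a + r) ^ 2)
    refine h.congr_deriv ?_
    rw [hAs_def]; ring
  have hBd : HasDerivAt (fun s' => Bfun r a t s') Bs s := by
    unfold Bfun
    have h1 : HasDerivAt (fun s' => Afun r a t s' ^ 2) (2 * Afun r a t s * As) s := by
      have := hA.pow 2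
      refine this.congr_deriv ?_
      ring
    have h2 := hlin1.exp.const_mul (16 * r ^ 2)
    have h := h1.sub h2
    refine h.congr_deriv ?_
    rw [hBs_def]; ring
  set sB : ℝ := Real.sqrt (Bfun r a t s) with hsB_def
  have hsB : 0 < sB := Real.sqrt_pos.mpr hBpos
  have hsq : sB ^ 2 = Bfun r a t s := Real.sq_sqrt hBpos.le
  have hsqrt : HasDerivAt (fun s' => Real.sqrt (Bfun r a t s')) (1 / (2 * sB) * Bs) s :=
    (Real.hasDerivAt_sqrt hBpos.ne').comp s hBd
  have hdiv : HasDerivAt (fun s' => Cfun r a t s' / Real.sqrt (Bfun r a t s')) _ s :=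
    hC.div hsqrt hsB.ne'
  rw [hdiv.deriv, div_eq_zero_iff, or_iff_left (pow_ne_zero 2 hsB.ne')]
  -- step 3: clear the square root from the numerator
  have key : (Cs * sB - Cfun r a t s * (1 / (2 * sB) * Bs) = 0) ↔
      2 * Cs * Bfun r a t s - Cfun r a t s * Bs = 0 := by
    have hfac : 2 * Cs * Bfun r a t s - Cfun r a t s * Bs =
        (Cs * sB - Cfun r a t s * (1 / (2 * sB) * Bs)) * (2 * sB) := by
      rw [← hsq]; field_simp
    constructor
    · intro h; rw [hfac, h, zero_mul]
    · intro h
      rcases mul_eq_zero.mp (hfac ▸ h) with h' | h'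
      · exact h'
      · exact absurd h' (by positivity)
  rw [key]
  -- step 4: the polynomial identity and factorization
  have hE : Real.exp (2 * s + 2 * t) = Real.exp (2 * s) * Real.exp (2 * t) :=
    Real.exp_add (2 * s) (2 * t)
  have hid : 2 * Cs * Bfun r a t s - Cfun r a t s * Bs =
      32 * r * (Real.exp (2 * s) * Real.exp (2 * t)) *
        ((a + r) + (a - r) * Real.exp (2 * s)) * (Real.exp (2 * t) - (r ^ 2 - a ^ 2)) := by
    rw [hCs_def, hBs_def, hAs_def]
    unfold Bfun Afun Cfun
    rw [hE]
    ring
  rw [hid]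
  have hX : (0 : ℝ) < Real.exp (2 * s) := Real.exp_pos _
  have hY : (0 : ℝ) < Real.exp (2 * t) := Real.exp_pos _
  have hfactor : (32 * r * (Real.exp (2 * s) * Real.exp (2 * t)) *
        ((a + r) + (a - r) * Real.exp (2 * s)) * (Real.exp (2 * t) - (r ^ 2 - a ^ 2)) = 0) ↔
      ((a + r) + (a - r) * Real.exp (2 * s) = 0 ∨ Real.exp (2 * t) - (r ^ 2 - a ^ 2) = 0) := by
    constructor
    · intro h
      rcases mul_eq_zero.mp h with h' | h'
      · rcases mul_eq_zero.mp h' with h'' | h''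
        · exact absurd h'' (by positivity)
        · exact Or.inl h''
      · exact Or.inr h'
    · rintro (h | h)
      · rw [h, mul_zero, zero_mul]
      · rw [h, mul_zero]
  rw [hfactor]
  -- step 5: identify the factors with t = t₀ and s = s₀
  have hsiff : ((a + r) + (a - r) * Real.exp (2 * s) = 0) ↔ s = s₀ := by
    constructor
    · intro h
      have hX' : Real.exp (2 * s) = (r + a) / (r - a) := by
        rw [eq_div_iff hra1.ne']
        linear_combination -h
      have hexp : Real.exp (2 * s) = Real.exp (2 * s₀) := by rw [hX', hs₀]
      have := Real.exp_eq_exp.mp hexp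
      linarith
    · intro h; subst h
      rw [hs₀]
      field_simp
      ring
  have htiff : (Real.exp (2 * t) - (r ^ 2 - a ^ 2) = 0) ↔ t = t₀ := by
    constructor
    · intro h
      have hexp : Real.exp (2 * t) = Real.exp (2 * t₀) := by rw [ht₀]; linarith
      have := Real.exp_eq_exp.mp hexp
      linarith
    · intro h; subst h; rw [ht₀]; ring
  rw [hsiff, htiff]
  exact or_comm
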